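/- Let E be a finite-dimensional evolution algebra whose structure matrix A is non-singular, and let T = (t_{ij}) be the matrix of an automorphism of E with respect to the natural basis. Then T has exactly one non-zero entry in each row and each column, i.e., T = D·P for a non-singular diagonal matrix D and a permutation matrix P. -/
import Mathlib


/-- Evolution algebra multiplication on `Fin n → ℂ` determined by a structure
matrix `A`: basis vectors satisfy `eᵢ · eⱼ = 0` for `i ≠ j` and
`eᵢ · eᵢ = ∑ k, A i k • e k`. -/
noncomputable def eMul {n : ℕ} (A : Matrix (Fin n) (Fin n) ℂ) (x y : Fin n → ℂ) : Fin n → ℂ :=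
  fun k => ∑ p, x p * y p * A p k

/-- if the structure matrix `A` of an evolution algebra is
non-singular, then the matrix `T` of any automorphism (w.r.t. the natural
basis) has exactly one non-zero entry in each row and each column; i.e. it is
the product of a non-singular diagonal matrix and a permutation matrix. -/
theorem automorphism_matrix_monomial {n : ℕ} (A : Matrix (Fin n) (Fin n) ℂ)
    (hA : IsUnit A.det)
    (φ : (Fin n → ℂ) ≃ₗ[ℂ] (Fin n → ℂ))
    (hφ : ∀ x y : Fin n → ℂ, φ (eMul A x y) = eMul A (φ x) (φ y))
    (T : Matrix (Fin n) (Fin n) ℂ)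
    (hT : ∀ i j : Fin n, T i j = φ (Pi.single i 1) j) :
    ((∀ i : Fin n, ∃! j : Fin n, T i j ≠ 0) ∧ (∀ j : Fin n, ∃! i : Fin n, T i j ≠ 0)) ∧
    ∃ (σ : Equiv.Perm (Fin n)) (d : Fin n → ℂ), (∀ i, d i ≠ 0) ∧
      ∀ i j : Fin n, T i j = if j = σ i then d i else 0 := by
  classical
  have hAU : IsUnit A := (Matrix.isUnit_iff_isUnit_det A).2 hA
  -- disjoint supports of distinct rows
  have hdisj : ∀ i j : Fin n, i ≠ j → ∀ p, T i p * T j p = 0 := by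
    intro i j hij
    have h0 : eMul A (Pi.single i (1:ℂ)) (Pi.single j 1) = 0 := by
      funext k
      apply Finset.sum_eq_zero
      intro q _
      rcases eq_or_ne q j with rfl | hq
      · rw [Pi.single_eq_of_ne hij.symm]; ring
      · rw [Pi.single_eq_of_ne hq]; ring
    have h1 : eMul A (φ (Pi.single i 1)) (φ (Pi.single j 1)) = 0 := by
      rw [← hφ, h0, map_zero]
    have hv : Matrix.vecMul (fun p => T i p * T j p) A = Matrix.vecMul 0 A := by
      funext k
      have hk := congrFun h1 k
      simp only [eMul, Pi.zero_apply] at hk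
      simp only [Matrix.vecMul, dotProduct, Pi.zero_apply, zero_mul,
        Finset.sum_const_zero]
      rw [← hk]
      apply Finset.sum_congr rfl
      intro p _
      rw [hT i p, hT j p]
    have hz := Matrix.vecMul_injective_iff_isUnit.2 hAU hv
    intro p
    exact congrFun hz p
  -- rows are nonzero
  have hrow : ∀ i : Fin n, ∃ p, T i p ≠ 0 := by
    intro i
    by_contra h
    push_neg at h
    have h1 : φ (Pi.single i (1:ℂ)) = 0 := by
      funext p; rw [← hT i p]; exact h p
    have h2 : (Pi.single i (1:ℂ)) = 0 :=
      φ.injective (h1.trans (map_zero φ).symm)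
    have := congrFun h2 i
    simp at this
  -- supports
  set S : Fin n → Finset (Fin n) := fun i => Finset.univ.filter (fun p => T i p ≠ 0) with hS
  have hmem : ∀ i p, p ∈ S i ↔ T i p ≠ 0 := by
    intro i p; simp [hS]
  have hSne : ∀ i, (S i).Nonempty := by
    intro i
    obtain ⟨p, hp⟩ := hrow i
    exact ⟨p, (hmem i p).2 hp⟩
  have hSdisj : ∀ i j, i ≠ j → Disjoint (S i) (S j) := by
    intro i j hij
    rw [Finset.disjoint_left]
    intro p hpi hpj
    exact (mul_ne_zero ((hmem i p).1 hpi) ((hmem j p).1 hpj)) (hdisj i j hij p)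
  have hcard : ∀ i, (S i).card = 1 := by
    have hone : ∀ i ∈ (Finset.univ : Finset (Fin n)), 1 ≤ (S i).card :=
      fun i _ => Finset.card_pos.2 (hSne i)
    have hsum : ∑ i : Fin n, (S i).card ≤ ∑ _i : Fin n, 1 := by
      rw [← Finset.card_biUnion (fun i _ j _ h => hSdisj i j h)]
      simpa using Finset.card_le_univ (Finset.univ.biUnion S)
    have heq : ∑ i : Fin n, (1:ℕ) = ∑ i : Fin n, (S i).card :=
      le_antisymm (Finset.sum_le_sum hone) hsum
    intro i
    exact ((Finset.sum_eq_sum_iff_of_le hone).1 heq i (Finset.mem_univ i)).symm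
  -- the unique nonzero column in row i
  have hsig : ∀ i : Fin n, ∃ j, S i = {j} := fun i => Finset.card_eq_one.1 (hcard i)
  choose f hf using hsig
  have hTf : ∀ i, T i (f i) ≠ 0 := by
    intro i
    have : f i ∈ S i := by rw [hf i]; exact Finset.mem_singleton_self _
    exact (hmem i (f i)).1 this
  have hTne : ∀ i j, j ≠ f i → T i j = 0 := by
    intro i j hj
    by_contra h
    have : j ∈ S i := (hmem i j).2 h
    rw [hf i, Finset.mem_singleton] at this
    exact hj this
  have hfinj : Function.Injective f := by
    intro i j hij
    by_contra h
    have := hdisj i j h (f i)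
    rw [hij] at this
    exact (mul_ne_zero (by rw [← hij]; exact hTf i) (hTf j)) this
  let σ : Equiv.Perm (Fin n) := Equiv.ofBijective f (Finite.injective_iff_bijective.1 hfinj)
  have hσ : ∀ i, σ i = f i := fun i => rfl
  refine ⟨⟨?_, ?_⟩, σ, fun i => T i (f i), hTf, ?_⟩
  · intro i
    exact ⟨f i, hTf i, fun j hj => by_contra fun h => hj (hTne i j h)⟩
  · intro j
    refine ⟨σ.symm j, ?_, ?_⟩
    · have hfs : f (σ.symm j) = j := σ.apply_symm_apply j
      have h2 := hTf (σ.symm j)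
      rwa [hfs] at h2
    · intro i hi
      have hji : j = f i := by_contra fun h => hi (hTne i j h)
      apply σ.injective
      rw [σ.apply_symm_apply, hσ, ← hji]
  · intro i j
    rcases eq_or_ne j (σ i) with rfl | h
    · simp [hσ]
    · rw [if_neg h]
      exact hTne i j (by rwa [← hσ])
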